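/- For every integer k with 0 ≤ k ≤ l−2, the following identity holds in R_l: χ(l−1,0)·χ(l−1,2k+2) = χ(k,0)² + χ(l−2−k,2k+2)² + Z·χ(k,0)·χ(l−2−k,2k+2). (This is the generalised exchange relation (2) of Proposition 3.1, relating the ε-characters of the two Kirillov–Reshetikhin modules corresponding to a pair of diameters of the 2l-gon, expressed through the isomorphism of Theorem 4.1.) -/

import Mathlib

/-!
`Rl l` is the Laurent polynomial ring over `ℤ` in `l` commuting variables
`Y_0, Y_2, …, Y_{2l−2}`, with the index of `Y` read modulo `2l`.  It is realised
as the group algebra of the free abelian group `ZMod l →₀ ℤ`, the variable with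
even index `n` corresponding to the residue `n/2` modulo `l`.
-/

/-- The Laurent polynomial ring `ℤ[Y_0^{±1}, Y_2^{±1}, …, Y_{2l−2}^{±1}]`,
indices read modulo `2l`. -/
abbrev Rl (l : ℕ) : Type := AddMonoidAlgebra ℤ (ZMod l →₀ ℤ)

/-- The monomial `Y_n^e` (for `n` an even integer, read modulo `2l`). -/
noncomputable def Y (l : ℕ) (n e : ℤ) : Rl l :=
  AddMonoidAlgebra.single (Finsupp.single ((n / 2 : ℤ) : ZMod l) e) 1

/-- The `ε`-character `χ(k,a)` of the Kirillov–Reshetikhin module `W_ε(k,ε^a)`: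
`χ(k,a) = Σ_{i=0}^{k} (Π_{t=0}^{k−1−i} Y_{a+2t}) · (Π_{t=k+1−i}^{k} Y_{a+2t}^{−1})`. -/
noncomputable def chi (l : ℕ) (k : ℕ) (a : ℤ) : Rl l :=
  ∑ i ∈ Finset.range (k + 1),
    (∏ t ∈ Finset.range (k - i), Y l (a + 2 * (t : ℤ)) 1) *
      ∏ t ∈ Finset.Icc (k + 1 - i) k, Y l (a + 2 * (t : ℤ)) (-1)

/-- `Z = Y_0Y_2⋯Y_{2l−2} + (Y_0Y_2⋯Y_{2l−2})^{−1}`, the `ε`-character of the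
Frobenius pullback `z₁ = L(𝐘₁)`. -/
noncomputable def Z (l : ℕ) : Rl l :=
  (∏ t ∈ Finset.range l, Y l (2 * (t : ℤ)) 1) +
    ∏ t ∈ Finset.range l, Y l (2 * (t : ℤ)) (-1)

namespace DiamAux
open Finset

noncomputable def P (l : ℕ) (a : ℤ) (s : ℕ) : Rl l :=
  ∏ t ∈ Finset.range s, Y l (a + 2 * (t : ℤ)) 1

noncomputable def Pi (l : ℕ) (a : ℤ) (s : ℕ) : Rl l :=
  ∏ t ∈ Finset.range s, Y l (a + 2 * (t : ℤ)) (-1)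

lemma Y_mul_inv (l : ℕ) (n : ℤ) : Y l n 1 * Y l n (-1) = 1 := by
  rw [Y, Y, AddMonoidAlgebra.single_mul_single]
  simp [AddMonoidAlgebra.one_def]

lemma P_mul_Pi (l : ℕ) (a : ℤ) (s : ℕ) : P l a s * Pi l a s = 1 := by
  rw [P, Pi, ← Finset.prod_mul_distrib]
  simp [Y_mul_inv]

lemma Y_periodic (l : ℕ) (n e : ℤ) : Y l (n + 2 * l) e = Y l n e := by
  unfold Y
  congr 2
  have h : (n + 2 * (l : ℤ)) / 2 = n / 2 + l := by
    rw [show n + 2 * (l : ℤ) = n + l * 2 by ring, Int.add_mul_ediv_right _ _ (by norm_num)]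
  rw [h]
  push_cast
  simp

lemma P_congr (l : ℕ) {a b : ℤ} (h : a = b) (s : ℕ) : P l a s = P l b s := by rw [h]

lemma P_split (l : ℕ) (a : ℤ) (s s' : ℕ) :
    P l a (s + s') = P l a s * P l (a + 2 * s) s' := by
  rw [P, Finset.prod_range_add]
  congr 1
  apply Finset.prod_congr rfl
  intro t _
  congr 1
  push_cast
  ring

lemma P_periodic (l : ℕ) (a : ℤ) (s : ℕ) : P l (a + 2 * l) s = P l a s := by
  unfold P
  apply Finset.prod_congr rfl
  intro t _
  rw [show a + 2 * (l : ℤ) + 2 * t = (a + 2 * t) + 2 * l by ring, Y_periodic]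

lemma P_shift (l : ℕ) (u : ℕ) : P l (2 * u) l = P l 0 l := by
  have h1 : P l 0 (u + l) = P l 0 u * P l (2 * u) l := by
    rw [P_split]; ring_nf
  have h2 : P l 0 (u + l) = P l 0 l * P l 0 u := by
    rw [show u + l = l + u from Nat.add_comm u l, P_split]
    congr 1
    rw [show (0 : ℤ) + 2 * (l : ℕ) = 0 + 2 * l by push_cast; ring]
    exact P_periodic l 0 u
  have h3 : P l 0 u * P l (2 * u) l = P l 0 u * (P l 0 l) := by
    rw [← h1, h2]; ring
  calc P l (2 * u) l = (Pi l 0 u * P l 0 u) * P l (2 * u) l := by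
        rw [mul_comm (Pi l 0 u), P_mul_Pi, one_mul]
    _ = Pi l 0 u * (P l 0 u * P l 0 l) := by rw [mul_assoc, h3]
    _ = P l 0 l := by rw [← mul_assoc, mul_comm (Pi l 0 u), P_mul_Pi, one_mul]

lemma chi_eq (l : ℕ) (k : ℕ) (a : ℤ) :
    chi l k a = ∑ j ∈ Finset.range (k + 1), P l a j * Pi l (a + 2 * j + 2) (k - j) := by
  rw [chi, ← Finset.sum_range_reflect]
  apply Finset.sum_congr rfl
  intro j hj
  rw [Finset.mem_range] at hj
  have h1 : k - (k + 1 - 1 - j) = j := by omega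
  have h2 : k + 1 - (k + 1 - 1 - j) = j + 1 := by omega
  rw [h1, h2]
  congr 1
  rw [show Finset.Icc (j+1) k = Finset.Ico (j+1) (k+1) by rw [Finset.Ico_add_one_right_eq_Icc],
    Finset.prod_Ico_eq_prod_range]
  rw [show k + 1 - (j + 1) = k - j by omega]
  unfold Pi
  apply Finset.prod_congr rfl
  intro t _
  congr 1
  push_cast
  ring

lemma P_one (l : ℕ) (a : ℤ) : P l a 1 = Y l a 1 := by
  simp [P]

lemma clear_gen (l : ℕ) (a : ℤ) (j s : ℕ) :
    P l a (j + 1 + s) * (P l a j * Pi l (a + 2 * j + 2) s) =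
      P l a j * P l a j * Y l (a + 2 * j) 1 := by
  have h1 : P l a (j + 1 + s) = P l a j * Y l (a + 2 * j) 1 * P l (a + 2 * j + 2) s := by
    rw [P_split l a (j + 1) s, P_split l a j 1, P_one,
      P_congr l (show a + 2 * ((j + 1 : ℕ) : ℤ) = a + 2 * j + 2 by push_cast ; ring)]
  rw [h1]
  calc P l a j * Y l (a + 2 * j) 1 * P l (a + 2 * j + 2) s *
        (P l a j * Pi l (a + 2 * j + 2) s)
      = P l a j * P l a j * Y l (a + 2 * j) 1 *
        (P l (a + 2 * j + 2) s * Pi l (a + 2 * j + 2) s) := by ring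
    _ = _ := by rw [P_mul_Pi, mul_one]

noncomputable def Qm (l : ℕ) (u : ℕ) : Rl l :=
  P l 0 u * P l 0 u * Y l (2 * u) 1

lemma Qm_eq_clear (l : ℕ) (j : ℕ) :
    P l 0 j * P l 0 j * Y l (0 + 2 * (j : ℤ)) 1 = Qm l j := by
  rw [Qm, zero_add]

lemma Qm_shift_add (l : ℕ) (k j : ℕ) :
    Qm l (k + 1 + j) = (P l 0 (k + 1) * P l 0 (k + 1)) *
      (P l (2 * (k : ℤ) + 2) j * P l (2 * (k : ℤ) + 2) j *
        Y l ((2 * (k : ℤ) + 2) + 2 * j) 1) := by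
  rw [Qm, P_split l 0 (k + 1) j,
    P_congr l (show (0 : ℤ) + 2 * ((k + 1 : ℕ) : ℤ) = 2 * (k : ℤ) + 2 by push_cast; ring),
    show Y l (2 * ((k + 1 + j : ℕ) : ℤ)) 1 = Y l ((2 * (k : ℤ) + 2) + 2 * j) 1 by
      congr 1; push_cast; ring]
  ring

lemma Qm_period (l : ℕ) (u : ℕ) :
    Qm l (u + l) = Qm l u * (P l 0 l * P l 0 l) := by
  rw [Qm, Qm, P_split l 0 u l,
    P_congr l (show (0 : ℤ) + 2 * ((u : ℕ) : ℤ) = 2 * (u : ℕ) by ring),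
    P_shift l u,
    show Y l (2 * ((u + l : ℕ) : ℤ)) 1 = Y l (2 * (u : ℤ)) 1 by
      rw [show (2 : ℤ) * ((u + l : ℕ) : ℤ) = 2 * (u : ℤ) + 2 * l by push_cast; ring,
        Y_periodic]]
  ring

end DiamAux

open DiamAux Finset

/-- The generalised exchange relation (2) of Proposition 3.1: for `0 ≤ k ≤ l−2`,
`χ(l−1,0)·χ(l−1,2k+2) = χ(k,0)² + χ(l−2−k,2k+2)² + Z·χ(k,0)·χ(l−2−k,2k+2)`. -/
theorem diameter_exchange (l : ℕ) (hl : 2 ≤ l) (k : ℕ) (hk : k ≤ l - 2) :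
    chi l (l - 1) 0 * chi l (l - 1) (2 * (k : ℤ) + 2) =
      chi l k 0 ^ 2 + chi l (l - 2 - k) (2 * (k : ℤ) + 2) ^ 2 +
        Z l * chi l k 0 * chi l (l - 2 - k) (2 * (k : ℤ) + 2) := by
  obtain ⟨d, rfl⟩ : ∃ d, l = k + d + 2 := ⟨l - 2 - k, by omega⟩
  set l := k + d + 2 with hldef
  rw [show l - 1 = k + d + 1 by omega, show l - 2 - k = d by omega]
  set a : ℤ := 2 * (k : ℤ) + 2 with ha
  set F : Rl l := P l 0 l with hF
  set Fi : Rl l := Pi l 0 l with hFi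
  set Pk : Rl l := P l 0 (k + 1) with hPk
  set Pki : Rl l := Pi l 0 (k + 1) with hPki
  set A : Rl l := ∑ j ∈ range (k + 1), Qm l j with hA
  set B : Rl l := ∑ j ∈ range (d + 1), Qm l (k + 1 + j) with hB
  have hFF : F * Fi = 1 := P_mul_Pi l 0 l
  have hPP : Pk * Pki = 1 := P_mul_Pi l 0 (k + 1)
  have hI : F * chi l (k + d + 1) 0 = ∑ j ∈ range l, Qm l j := by
    rw [chi_eq, Finset.mul_sum, show k + d + 1 + 1 = l from rfl]
    refine Finset.sum_congr rfl fun j hj => ?_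
    rw [Finset.mem_range] at hj
    rw [show F = P l 0 (j + 1 + (k + d + 1 - j)) by rw [hF]; congr 1; omega,
      clear_gen, Qm_eq_clear]
  have hII : (Pk * Pk) * (F * chi l (k + d + 1) a) =
      ∑ j ∈ range l, Qm l (k + 1 + j) := by
    rw [chi_eq, Finset.mul_sum, Finset.mul_sum, show k + d + 1 + 1 = l from rfl]
    refine Finset.sum_congr rfl fun j hj => ?_
    rw [Finset.mem_range] at hj
    rw [show F = P l a (j + 1 + (k + d + 1 - j)) by
        rw [hF, ← P_shift l (k + 1),
          P_congr l (show (2 : ℤ) * ((k + 1 : ℕ) : ℤ) = a by rw [ha]; push_cast; ring)]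
        congr 1; omega,
      clear_gen, ← Qm_shift_add]
  have hIII : Pk * chi l k 0 = A := by
    rw [chi_eq, Finset.mul_sum, hA]
    refine Finset.sum_congr rfl fun j hj => ?_
    rw [Finset.mem_range] at hj
    rw [show Pk = P l 0 (j + 1 + (k - j)) by rw [hPk]; congr 1; omega,
      clear_gen, Qm_eq_clear]
  have hIV : Pk * (F * chi l d a) = B := by
    rw [chi_eq, Finset.mul_sum, Finset.mul_sum, hB]
    refine Finset.sum_congr rfl fun j hj => ?_
    rw [Finset.mem_range] at hj
    rw [show F = Pk * P l a (j + 1 + (d - j)) by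
        have h := P_split l 0 (k + 1) (d + 1)
        rw [show (k + 1) + (d + 1) = l by omega,
          P_congr l (show (0 : ℤ) + 2 * ((k + 1 : ℕ) : ℤ) = a by rw [ha]; push_cast; ring)] at h
        rw [hF, hPk, h]
        congr 2; omega]
    calc Pk * (Pk * P l a (j + 1 + (d - j)) * (P l a j * Pi l (a + 2 * j + 2) (d - j)))
        = (Pk * Pk) *
          (P l a (j + 1 + (d - j)) * (P l a j * Pi l (a + 2 * j + 2) (d - j))) := by ring
      _ = Qm l (k + 1 + j) := by rw [clear_gen, ← Qm_shift_add]
  have hS1 : ∑ j ∈ range l, Qm l j = A + B := by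
    have hsum := Finset.sum_range_add (fun j => Qm l j) (k + 1) (d + 1)
    rw [show (k + 1) + (d + 1) = l by omega] at hsum
    rw [hsum, hA, hB]
  have hS2 : ∑ j ∈ range l, Qm l (k + 1 + j) = B + A * (F * F) := by
    have hsum := Finset.sum_range_add (fun j => Qm l (k + 1 + j)) (d + 1) (k + 1)
    rw [show (d + 1) + (k + 1) = l by omega] at hsum
    rw [hsum, hB, hA, Finset.sum_mul]
    refine congrArg (HAdd.hAdd _) ?_
    refine Finset.sum_congr rfl fun j hj => ?_
    rw [show k + 1 + (d + 1 + j) = j + l by omega, Qm_period, hF]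
  have hZ : Z l = F + Fi := by
    rw [hF, hFi, Z, P, Pi]
    simp
  have hZF : Z l * F = F * F + 1 := by
    rw [hZ, add_mul, mul_comm Fi F, hFF]
  set u : Rl l := Pk * Pk * (F * F) with hu
  set ui : Rl l := Pki * Pki * (Fi * Fi) with hui
  have huui : u * ui = 1 := by
    rw [hu, hui, show Pk * Pk * (F * F) * (Pki * Pki * (Fi * Fi)) =
      (Pk * Pki) * (Pk * Pki) * ((F * Fi) * (F * Fi)) by ring, hPP, hFF]
    norm_num
  have hmain : chi l (k + d + 1) 0 * chi l (k + d + 1) a * u =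
      (chi l k 0 ^ 2 + chi l d a ^ 2 + Z l * chi l k 0 * chi l d a) * u := by
    have e1 : chi l (k + d + 1) 0 * chi l (k + d + 1) a * u =
        (F * chi l (k + d + 1) 0) * ((Pk * Pk) * (F * chi l (k + d + 1) a)) := by
      rw [hu]; ring
    have e2 : (chi l k 0 ^ 2 + chi l d a ^ 2 + Z l * chi l k 0 * chi l d a) * u =
        (Pk * chi l k 0) * (Pk * chi l k 0) * (F * F) +
          (Pk * (F * chi l d a)) * (Pk * (F * chi l d a)) +
          (Z l * F) * ((Pk * chi l k 0) * (Pk * (F * chi l d a))) := by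
      rw [hu]; ring
    rw [e1, e2, hI, hII, hIII, hIV, hS1, hS2, hZF]
    ring
  calc chi l (k + d + 1) 0 * chi l (k + d + 1) a
      = chi l (k + d + 1) 0 * chi l (k + d + 1) a * (u * ui) := by rw [huui, mul_one]
    _ = (chi l (k + d + 1) 0 * chi l (k + d + 1) a * u) * ui := by ring
    _ = ((chi l k 0 ^ 2 + chi l d a ^ 2 + Z l * chi l k 0 * chi l d a) * u) * ui := by
        rw [hmain]
    _ = (chi l k 0 ^ 2 + chi l d a ^ 2 + Z l * chi l k 0 * chi l d a) * (u * ui) := by ring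
    _ = _ := by rw [huui, mul_one]
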